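/- arXiv:2601.12144 — 4 statements merged into one kernel-verified Lean document; each statement's English description precedes it below -/
import Mathlib

section
/- Let n = 2m+1 with m ≥ 1 be odd. Then a_0 = 1 and for every integer j ≥ 1, a_j = 2^j/(2n) + (1/n)·Σ_{k=1}^{m} (2·cos(2πk/n))^j (an equality of real numbers). Equivalently, the Hilbert series Σ_{j≥0} a_j t^j of ℂ⟨u,v⟩^{D_{2n}} equals 1/2 + 1/(2n(1−2t)) + (1/n)·Σ_{k=1}^{m} 1/(1 − 2cos(2πk/n)·t). -/
open scoped Real

noncomputable section

/-- Words in two letters. -/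
abbrev FW := FreeMonoid (Fin 2)

/-- The free associative unital ℂ-algebra on two generators. -/
abbrev FA := MonoidAlgebra ℂ FW

/-- The generator `u`. -/
def gu : FA := MonoidAlgebra.of ℂ FW (FreeMonoid.of 0)

/-- The generator `v`. -/
def gv : FA := MonoidAlgebra.of ℂ FW (FreeMonoid.of 1)

/-- The algebra endomorphism `ρ` with `ρ(u) = ξ u`, `ρ(v) = ξ⁻¹ v`, `ξ = exp(2πi/n)`. -/
def dRho (n : ℕ) : FA →ₐ[ℂ] FA :=
  MonoidAlgebra.lift ℂ FA FW
    (FreeMonoid.lift fun i : Fin 2 =>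
      if i = 0 then Complex.exp (2 * Real.pi * Complex.I / n) • gu
      else (Complex.exp (2 * Real.pi * Complex.I / n))⁻¹ • gv)

/-- The algebra endomorphism `τ` exchanging `u` and `v`. -/
def dTau : FA →ₐ[ℂ] FA :=
  MonoidAlgebra.lift ℂ FA FW
    (FreeMonoid.lift fun i : Fin 2 => if i = 0 then gv else gu)

/-- The invariant algebra `ℂ⟨u,v⟩^{D_{2n}}`. -/
def invAlg (n : ℕ) : Subalgebra ℂ FA :=
  AlgHom.equalizer (dRho n) (AlgHom.id ℂ FA) ⊓ AlgHom.equalizer dTau (AlgHom.id ℂ FA)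

/-- The degree-`j` homogeneous component of `ℂ⟨u,v⟩`: the span of words of length `j`. -/
def degComp (j : ℕ) : Submodule ℂ FA :=
  MonoidAlgebra.supported ℂ ℂ {w : FW | FreeMonoid.length w = j}

/-- `a_j`: the dimension of the degree-`j` homogeneous component of the invariant algebra. -/
def aDim (n j : ℕ) : ℕ :=
  Module.finrank ℂ ↥((invAlg n).toSubmodule ⊓ degComp j)

/-! `ρ` multiplies a word `w` by `ξ ^ (#u(w) - #v(w))` and `τ` swaps its letters, so an element is
invariant iff it is supported on the balanced words (`n ∣ #u(w) - #v(w)`) and its coefficients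
are constant on `swap`-orbits. In positive degree `swap` fixes no word, so `a_j` is half the number
`B_j` of balanced words of length `j`. Filtering with the `n`-th roots of unity,
`n B_j = ∑_{k<n} (ξ^k + ξ^{-k})^j = ∑_{k<n} (2 cos (2πk/n))^j`, and for odd `n` the terms `k`
and `n - k` pair up. -/

open Finset

namespace Finsupp

variable {K X : Type*} [Field K]

theorem finrank_eq_card_transversal (σ : X → X) (hσ : σ.Involutive) (T : Finset X)
    (hT : ∀ x ∈ T, σ x ∈ T → σ x = x) (p : Submodule K (X →₀ K))
    (hp : ∀ f, f ∈ p ↔ ↑f.support ⊆ ↑T ∪ σ '' ↑T ∧ ∀ x, f (σ x) = f x) :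
    Module.finrank K p = #T := by
  classical
  let ext (g : T → K) (x : X) : K :=
    if h : x ∈ T then g ⟨x, h⟩ else if h' : σ x ∈ T then g ⟨σ x, h'⟩ else 0
  have ext_symm (g : T → K) (x : X) : ext g (σ x) = ext g x := by
    by_cases hx : x ∈ T <;> by_cases hσx : σ x ∈ T
    · simp [ext, hx, hT x hx hσx]
    all_goals simp [ext, hx, hσx, hσ x]
  let restrict : p →ₗ[K] (T → K) :=
    { toFun := fun f t => (f : X →₀ K) t
      map_add' := fun _ _ => rfl
      map_smul' := fun _ _ => rfl }
  let e : p ≃ₗ[K] (T → K) :=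
    { restrict with
      invFun := fun g => ⟨Finsupp.onFinset (T ∪ T.image σ) (ext g) fun x hx => by
          by_contra hxT
          simp only [mem_union, mem_image, not_or, not_exists, not_and] at hxT
          have hσx : σ x ∉ T := fun h => hxT.2 _ h (hσ x)
          exact hx (by simp [ext, hxT.1, hσx]), by
        refine (hp _).2 ⟨fun x hx => ?_, ext_symm g⟩
        simpa using Finsupp.support_onFinset_subset hx⟩
      left_inv := fun f => by
        obtain ⟨hsupp, hsymm⟩ := (hp f).1 f.2
        ext x
        by_cases hx : x ∈ T
        · simp [ext, restrict, hx]
        by_cases hσx : σ x ∈ T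
        · simp [ext, restrict, hx, hσx, hsymm]
        have : x ∉ (f : X →₀ K).support := fun h => by
          rcases hsupp h with h | ⟨y, hy, rfl⟩
          · exact hx h
          · exact hσx (by rwa [hσ y])
        simpa [ext, restrict, hx, hσx] using (Finsupp.notMem_support_iff.1 this).symm
      right_inv := fun g => by
        funext t
        simp [ext, restrict] }
  rw [e.finrank_eq, Module.finrank_fintype_fun_eq_card, Fintype.card_coe]

end Finsupp

namespace FreeMonoid

instance {α : Type*} [DecidableEq α] : DecidableEq (FreeMonoid α) :=
  inferInstanceAs (DecidableEq (List α))

variable {α : Type*} [Fintype α]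

variable (α) in
def wordsOfLength (j : ℕ) : Finset (FreeMonoid α) :=
  univ.map ⟨fun f : Fin j → α => ofList (List.ofFn f), fun _ _ h => List.ofFn_injective h⟩

theorem mem_wordsOfLength {j : ℕ} {w : FreeMonoid α} : w ∈ wordsOfLength α j ↔ w.length = j := by
  refine ⟨fun h => ?_, fun h => ?_⟩
  · obtain ⟨f, -, rfl⟩ := Finset.mem_map.1 h
    exact List.length_ofFn
  · subst h
    exact Finset.mem_map.2 ⟨fun i => w.toList[i], mem_univ _, List.ofFn_getElem⟩

theorem sum_wordsOfLength {R : Type*} [CommSemiring R] (χ : FreeMonoid α →* R) (j : ℕ) :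
    ∑ w ∈ wordsOfLength α j, χ w = (∑ a, χ (of a)) ^ j := by
  rw [Fintype.sum_pow, wordsOfLength, sum_map]
  refine sum_congr rfl fun f _ => ?_
  change χ (ofList (List.ofFn f)) = _
  rw [← lift_restrict χ, lift_ofList, List.map_ofFn, List.prod_ofFn]
  rfl

end FreeMonoid

theorem sum_range_pow_of_pow_eq_one {R : Type*} [CommRing R] [IsDomain R] [DecidableEq R]
    {x : R} {n : ℕ} (hx : x ^ n = 1) :
    ∑ k ∈ range n, x ^ k = if x = 1 then (n : R) else 0 := by
  split_ifs with h
  · simp [h]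
  · have h' := geom_sum_mul x n
    rw [hx, sub_self] at h'
    exact (mul_eq_zero.1 h').resolve_right (sub_ne_zero.2 h)

theorem Finset.sum_range_eq_add_two_nsmul_of_symm {M : Type*} [AddCommMonoid M] (f : ℕ → M)
    {m n : ℕ} (hn : n = 2 * m + 1) (hf : ∀ k ∈ Icc 1 m, f (n - k) = f k) :
    ∑ k ∈ range n, f k = f 0 + 2 • ∑ k ∈ Icc 1 m, f k := by
  have hreflect : ∑ k ∈ Ico (m + 1) n, f k = ∑ k ∈ Icc 1 m, f k := by
    rw [← sum_congr rfl hf, ← Ico_add_one_right_eq_Icc, sum_Ico_reflect _ _ (by omega)]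
    congr 1
    ext
    simp only [mem_Ico]
    omega
  rw [range_eq_Ico, sum_eq_sum_Ico_succ_bot (by omega),
    ← sum_Ico_consecutive _ (by omega : 1 ≤ m + 1) (by omega : m + 1 ≤ n), hreflect,
    Ico_add_one_right_eq_Icc, two_nsmul]

theorem Real.cos_two_pi_mul_natSub_div {n k : ℕ} (hk : k ≤ n) :
    Real.cos (2 * π * ↑(n - k) / n) = Real.cos (2 * π * k / n) := by
  rcases eq_or_ne n 0 with rfl | hn
  · rw [Nat.le_zero.1 hk]
  rw [Nat.cast_sub hk, mul_sub, sub_div, mul_div_assoc, div_self (Nat.cast_ne_zero.2 hn), mul_one,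
    Real.cos_two_pi_sub]

namespace DihedralInvariants

def ξ (n : ℕ) : ℂ := Complex.exp (2 * π * Complex.I / n)

def swap : FW →* FW := FreeMonoid.map Fin.rev

def weight (z : ℂ) : FW →* ℂ := FreeMonoid.lift ![z, z⁻¹]

lemma swap_involutive : Function.Involutive swap := fun w => by
  rw [swap, FreeMonoid.map_map, Fin.rev_involutive.comp_self, FreeMonoid.map_id, MonoidHom.id_apply]

lemma length_swap (w : FW) : (swap w).length = w.length :=
  List.length_map _

lemma head?_swap (w : FW) : (swap w).toList.head? = w.toList.head?.map Fin.rev :=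
  List.head?_map

lemma weight_swap (z : ℂ) (w : FW) : weight z (swap w) = (weight z w)⁻¹ := by
  induction w using FreeMonoid.inductionOn with
  | one => simp
  | of i => fin_cases i <;> simp [weight, swap]
  | mul x y hx hy => simp only [map_mul, hx, hy, mul_inv]

lemma weight_pow (z : ℂ) (k : ℕ) (w : FW) : weight (z ^ k) w = weight z w ^ k := by
  induction w using FreeMonoid.inductionOn with
  | one => simp
  | of i => fin_cases i <;> simp [weight, inv_pow]
  | mul x y hx hy => simp only [map_mul, hx, hy, mul_pow]

lemma weight_one (w : FW) : weight 1 w = 1 := by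
  simpa using weight_pow 1 0 w

lemma dRho_of (n : ℕ) (w : FW) :
    dRho n (MonoidAlgebra.of ℂ FW w) = weight (ξ n) w • MonoidAlgebra.of ℂ FW w := by
  induction w using FreeMonoid.inductionOn with
  | one => rw [map_one, map_one, map_one, one_smul]
  | of i =>
    rw [dRho, MonoidAlgebra.lift_of, FreeMonoid.lift_eval_of]
    fin_cases i <;> simp [weight, ξ, gu, gv]
  | mul x y hx hy => rw [map_mul, map_mul, hx, hy, smul_mul_smul_comm, map_mul]

lemma dTau_of (w : FW) : dTau (MonoidAlgebra.of ℂ FW w) = MonoidAlgebra.of ℂ FW (swap w) := by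
  induction w using FreeMonoid.inductionOn with
  | one => simp only [map_one]
  | of i =>
    rw [dTau, MonoidAlgebra.lift_of, FreeMonoid.lift_eval_of]
    fin_cases i <;> simp [swap, gu, gv]
  | mul x y hx hy => rw [map_mul, map_mul, hx, hy, map_mul, map_mul]

lemma coeff_dRho (n : ℕ) (f : FA) (w : FW) :
    (dRho n f).coeff w = weight (ξ n) w * f.coeff w := by
  induction f using MonoidAlgebra.induction_linear with
  | zero => simp
  | add f g hf hg => simp [hf, hg, mul_add]
  | single u c =>
    rw [← MonoidAlgebra.smul_of, map_smul, dRho_of, smul_comm, MonoidAlgebra.smul_of,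
      MonoidAlgebra.coeff_smul_apply, MonoidAlgebra.coeff_single, Finsupp.single_apply]
    split_ifs with h
    · rw [h, smul_eq_mul]
    · simp

lemma coeff_dTau (f : FA) (w : FW) : (dTau f).coeff w = f.coeff (swap w) := by
  induction f using MonoidAlgebra.induction_linear with
  | zero => simp
  | add f g hf hg => simp [hf, hg]
  | single u c =>
    have hswap : swap u = w ↔ u = swap w :=
      ⟨fun h => h ▸ (swap_involutive u).symm, fun h => h ▸ swap_involutive w⟩
    rw [← MonoidAlgebra.smul_of, map_smul, dTau_of, MonoidAlgebra.smul_of, MonoidAlgebra.smul_of,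
      MonoidAlgebra.coeff_single, MonoidAlgebra.coeff_single]
    simp only [Finsupp.single_apply, hswap]

def balancedWords (n j : ℕ) : Finset FW :=
  (FreeMonoid.wordsOfLength (Fin 2) j).filter fun w => weight (ξ n) w = 1

/-- One word from each `swap`-orbit of `balancedWords n j`. -/
def transversal (n j : ℕ) : Finset FW :=
  (balancedWords n j).filter fun w => w.toList.head? ≠ some 1

variable {n j : ℕ}

lemma mem_balancedWords {w : FW} :
    w ∈ balancedWords n j ↔ w.length = j ∧ weight (ξ n) w = 1 := by
  simp [balancedWords, FreeMonoid.mem_wordsOfLength]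

lemma swap_mem_balancedWords {w : FW} : swap w ∈ balancedWords n j ↔ w ∈ balancedWords n j := by
  simp [mem_balancedWords, length_swap, weight_swap]

lemma balancedWords_eq_union :
    balancedWords n j = transversal n j ∪ (transversal n j).image swap := by
  ext w
  simp only [transversal, mem_union, mem_filter, mem_image]
  constructor
  · intro hw
    by_cases h : w.toList.head? = some 1
    · exact Or.inr ⟨swap w, ⟨swap_mem_balancedWords.2 hw, by simp [head?_swap, h]⟩,
        swap_involutive w⟩
    · exact Or.inl ⟨hw, h⟩
  · rintro (⟨hw, -⟩ | ⟨v, ⟨hv, -⟩, rfl⟩)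
    · exact hw
    · exact swap_mem_balancedWords.2 hv

lemma eq_one_of_mem_transversal_of_swap_mem {w : FW} (hw : w ∈ transversal n j)
    (hsw : swap w ∈ transversal n j) : w = 1 := by
  simp only [transversal, mem_filter, head?_swap] at hw hsw
  rcases hl : w.toList with _ | ⟨a, l⟩
  · exact FreeMonoid.toList.injective hl
  · rw [hl] at hw hsw
    fin_cases a
    · exact absurd rfl hsw.2
    · exact absurd rfl hw.2

lemma card_balancedWords (hj : j ≠ 0) : #(balancedWords n j) = 2 * #(transversal n j) := by
  have hdisj : Disjoint (transversal n j) ((transversal n j).image swap) := by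
    refine disjoint_left.2 fun w hw hw' => ?_
    obtain ⟨v, hv, rfl⟩ := mem_image.1 hw'
    have hlen := (mem_balancedWords.1 (mem_filter.1 hv).1).1
    rw [eq_one_of_mem_transversal_of_swap_mem hv hw, FreeMonoid.length_one] at hlen
    exact hj hlen.symm
  rw [balancedWords_eq_union, card_union_of_disjoint hdisj,
    card_image_of_injective _ swap_involutive.injective, two_mul]

lemma mem_invariants_inf_degComp_iff (f : FA) :
    f ∈ (invAlg n).toSubmodule ⊓ degComp j ↔
      ↑f.coeff.support ⊆ (balancedWords n j : Set FW) ∧ ∀ w, f.coeff (swap w) = f.coeff w := by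
  have hRho : dRho n f = f ↔ ∀ w ∈ f.coeff.support, weight (ξ n) w = 1 := by
    simp only [MonoidAlgebra.ext_iff, Finsupp.ext_iff, coeff_dRho, Finsupp.mem_support_iff]
    exact forall_congr' fun w => ⟨fun h hw => (mul_eq_right₀ hw).1 h,
      fun h => (eq_or_ne (f.coeff w) 0).elim (fun h0 => by rw [h0, mul_zero])
        fun hw => by rw [h hw, one_mul]⟩
  have hTau : dTau f = f ↔ ∀ w, f.coeff (swap w) = f.coeff w := by
    simp only [MonoidAlgebra.ext_iff, Finsupp.ext_iff, coeff_dTau]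
  simp only [invAlg, degComp, Submodule.mem_inf, Subalgebra.mem_toSubmodule, Algebra.mem_inf,
    AlgHom.mem_equalizer, AlgHom.id_apply, MonoidAlgebra.mem_supported, hRho, hTau]
  constructor
  · rintro ⟨⟨hρ, hτ⟩, hdeg⟩
    exact ⟨fun w hw => mem_balancedWords.2 ⟨hdeg hw, hρ w hw⟩, hτ⟩
  · rintro ⟨hbal, hτ⟩
    exact ⟨⟨fun w hw => (mem_balancedWords.1 (hbal hw)).2, hτ⟩,
      fun w hw => (mem_balancedWords.1 (hbal hw)).1⟩

lemma aDim_eq_card_transversal : aDim n j = #(transversal n j) := by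
  rw [aDim, ← LinearEquiv.finrank_map_eq (MonoidAlgebra.coeffLinearEquiv ℂ)]
  refine Finsupp.finrank_eq_card_transversal swap swap_involutive _
    (fun w hw hsw => by rw [eq_one_of_mem_transversal_of_swap_mem hw hsw, map_one]) _ fun f => ?_
  rw [Submodule.mem_map_equiv, mem_invariants_inf_degComp_iff, balancedWords_eq_union,
    coe_union, coe_image]
  rfl

lemma aDim_zero : aDim n 0 = 1 := by
  rw [aDim_eq_card_transversal, card_eq_one]
  refine ⟨1, ext fun w => ?_⟩
  simp only [transversal, mem_filter, mem_balancedWords, FreeMonoid.length_eq_zero, mem_singleton]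
  constructor
  · exact fun h => h.1.1
  · rintro rfl
    simp

lemma two_mul_aDim (hj : j ≠ 0) : 2 * aDim n j = #(balancedWords n j) := by
  rw [aDim_eq_card_transversal, card_balancedWords hj]

lemma sum_weight_wordsOfLength (z : ℂ) (j : ℕ) :
    ∑ w ∈ FreeMonoid.wordsOfLength (Fin 2) j, weight z w = (z + z⁻¹) ^ j := by
  rw [FreeMonoid.sum_wordsOfLength, Fin.sum_univ_two]
  rfl

lemma ξ_pow_add_inv (n k : ℕ) : ξ n ^ k + (ξ n ^ k)⁻¹ = 2 * Complex.cos (2 * π * k / n) := by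
  rw [Complex.two_cos, ξ, ← Complex.exp_nat_mul, ← Complex.exp_neg]
  congr 2 <;> ring

lemma natCast_mul_card_balancedWords (hn : n ≠ 0) (j : ℕ) :
    (n : ℝ) * #(balancedWords n j) = ∑ k ∈ range n, (2 * Real.cos (2 * π * k / n)) ^ j := by
  have hξ : ξ n ^ n = 1 := (Complex.isPrimitiveRoot_exp n hn).pow_eq_one
  have hroot (w : FW) : weight (ξ n) w ^ n = 1 := by rw [← weight_pow, hξ, weight_one]
  apply Complex.ofReal_injective
  push_cast
  calc (n : ℂ) * #(balancedWords n j)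
      = ∑ w ∈ FreeMonoid.wordsOfLength (Fin 2) j, ∑ k ∈ range n, weight (ξ n) w ^ k := by
        simp only [sum_range_pow_of_pow_eq_one (hroot _), ← sum_filter, sum_const, nsmul_eq_mul,
          balancedWords, mul_comm]
    _ = ∑ k ∈ range n, (2 * Complex.cos (2 * π * k / n)) ^ j := by
        rw [sum_comm]
        simp only [← weight_pow, sum_weight_wordsOfLength, ξ_pow_add_inv]

end DihedralInvariants

open DihedralInvariants

theorem dihedral_invariants_hilbert_series_odd_general (m n : ℕ) (hn : n = 2 * m + 1) :
    aDim n 0 = 1 ∧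
      ∀ j : ℕ, 1 ≤ j →
        (aDim n j : ℝ) =
          2 ^ j / (2 * n) +
            (1 / n) * ∑ k ∈ Finset.Icc 1 m, (2 * Real.cos (2 * π * k / n)) ^ j := by
  refine ⟨aDim_zero, fun j hj => ?_⟩
  have hcount := natCast_mul_card_balancedWords (by omega : n ≠ 0) j
  rw [sum_range_eq_add_two_nsmul_of_symm _ hn fun k hk => by
    rw [Real.cos_two_pi_mul_natSub_div (by have := (mem_Icc.1 hk).2; omega)]] at hcount
  have hdim : (2 * aDim n j : ℝ) = #(balancedWords n j) := by
    exact_mod_cast two_mul_aDim (by omega)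
  rw [← hdim, Nat.cast_zero, mul_zero, zero_div, Real.cos_zero, mul_one, nsmul_eq_mul,
    Nat.cast_ofNat] at hcount
  have hn0 : (n : ℝ) ≠ 0 := by rw [hn]; positivity
  field_simp
  linarith

/-- Hilbert series of the dihedral invariants of the free algebra of rank 2: odd case
`n = 2m+1`, coefficientwise. -/
theorem dihedral_invariants_hilbert_series_odd (m n : ℕ) (hm : 1 ≤ m) (hn : n = 2 * m + 1) :
    aDim n 0 = 1 ∧
      ∀ j : ℕ, 1 ≤ j →
        (aDim n j : ℝ) =
          2 ^ j / (2 * n) +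
            (1 / n) * ∑ k ∈ Finset.Icc 1 m, (2 * Real.cos (2 * π * k / n)) ^ j :=
  dihedral_invariants_hilbert_series_odd_general m n hn

end
end

section
/- Let n = 2m+2 with m ≥ 1 be even. Then a_0 = 1 and for every integer j ≥ 1, a_j = 2^j/(2n) + (−2)^j/(2n) + (1/n)·Σ_{k=1}^{m} (2·cos(2πk/n))^j (an equality of real numbers). Equivalently, the Hilbert series Σ_{j≥0} a_j t^j of ℂ⟨u,v⟩^{D_{2n}} equals 1/2 + 1/(2n(1−2t)) + 1/(2n(1+2t)) + (1/n)·Σ_{k=1}^{m} 1/(1 − 2cos(2πk/n)·t). -/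
open scoped Real

noncomputable section

-- auxiliary defs
def xi (n : ℕ) : ℂ := Complex.exp (2 * Real.pi * Complex.I / n)

lemma xi_ne_zero (n : ℕ) : xi n ≠ 0 := Complex.exp_ne_zero _

def eps (a : Fin 2) : ℤ := if a = 0 then 1 else -1

def ew (w : FW) : ℤ := (FreeMonoid.toList w |>.map eps).sum

def sw (a : Fin 2) : Fin 2 := if a = 0 then 1 else 0

def sg (w : FW) : FW := FreeMonoid.map sw w

lemma sw_sw (a : Fin 2) : sw (sw a) = a := by fin_cases a <;> rfl

lemma sw_comp : sw ∘ sw = id := funext sw_sw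

lemma sg_sg (w : FW) : sg (sg w) = w := by
  simp [sg, ← FreeMonoid.toList.injective.eq_iff, FreeMonoid.toList_map, List.map_map, sw_comp]

lemma sg_inj : Function.Injective sg := Function.LeftInverse.injective sg_sg

lemma length_sg (w : FW) : FreeMonoid.length (sg w) = FreeMonoid.length w := by
  show (FreeMonoid.toList (sg w)).length = (FreeMonoid.toList w).length
  rw [sg, FreeMonoid.toList_map, List.length_map]

lemma eps_sw (a : Fin 2) : eps (sw a) = - eps a := by fin_cases a <;> rfl

lemma ew_sg (w : FW) : ew (sg w) = - ew w := by
  rw [ew, ew, sg, FreeMonoid.toList_map, List.map_map]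
  induction FreeMonoid.toList w with
  | nil => simp
  | cons a l ih => simp [ih, eps_sw]; ring

lemma ew_one : ew 1 = 0 := by simp [ew]

lemma ew_mul (x y : FW) : ew (x * y) = ew x + ew y := by
  simp [ew, FreeMonoid.toList_mul]

lemma ew_of (a : Fin 2) : ew (FreeMonoid.of a) = eps a := by simp [ew]

lemma sg_one : sg 1 = 1 := map_one _

lemma sg_mul (x y : FW) : sg (x * y) = sg x * sg y := map_mul _ _ _

lemma sg_of (a : Fin 2) : sg (FreeMonoid.of a) = FreeMonoid.of (sw a) := FreeMonoid.map_of _ _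

lemma dRho_of (n : ℕ) (w : FW) :
    dRho n (MonoidAlgebra.of ℂ FW w) = (xi n ^ ew w) • MonoidAlgebra.of ℂ FW w := by
  induction w using FreeMonoid.recOn with
  | one =>
      rw [show MonoidAlgebra.of ℂ FW (1:FW) = (1:FA) from map_one _, map_one, ew_one, zpow_zero, one_smul]
  | of_mul a l ih =>
      rw [map_mul, map_mul, ih, ew_mul, zpow_add₀ (xi_ne_zero n), ew_of]
      have ha : dRho n (MonoidAlgebra.of ℂ FW (FreeMonoid.of a)) =
          (xi n ^ eps a) • MonoidAlgebra.of ℂ FW (FreeMonoid.of a) := by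
        have h1 : dRho n (MonoidAlgebra.of ℂ FW (FreeMonoid.of a)) =
            (FreeMonoid.lift fun i : Fin 2 =>
              if i = 0 then xi n • gu else (xi n)⁻¹ • gv) (FreeMonoid.of a) := by
          simp [dRho, xi]
        rw [h1, FreeMonoid.lift_eval_of]
        fin_cases a <;> simp [eps, gu, gv, zpow_neg]
      rw [ha, smul_mul_smul_comm]

lemma dTau_of (w : FW) :
    dTau (MonoidAlgebra.of ℂ FW w) = MonoidAlgebra.of ℂ FW (sg w) := by
  induction w using FreeMonoid.recOn with
  | one =>
      rw [show MonoidAlgebra.of ℂ FW (1:FW) = (1:FA) from map_one _, map_one, sg_one,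
        show MonoidAlgebra.of ℂ FW (1:FW) = (1:FA) from map_one _]
  | of_mul a l ih =>
      rw [map_mul (MonoidAlgebra.of ℂ FW), map_mul dTau, ih, sg_mul, sg_of,
        map_mul (MonoidAlgebra.of ℂ FW)]
      congr 1
      have h1 : dTau (MonoidAlgebra.of ℂ FW (FreeMonoid.of a)) =
          (FreeMonoid.lift fun i : Fin 2 => if i = 0 then gv else gu) (FreeMonoid.of a) := by
        simp [dTau]
      rw [h1, FreeMonoid.lift_eval_of]
      fin_cases a <;> simp [sw, gu, gv]

lemma dRho_single (n : ℕ) (w : FW) :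
    dRho n (MonoidAlgebra.single w 1) = MonoidAlgebra.single w (xi n ^ ew w) := by
  rw [← MonoidAlgebra.of_apply, dRho_of, MonoidAlgebra.of_apply, MonoidAlgebra.smul_single', mul_one]

lemma dTau_single (w : FW) :
    dTau (MonoidAlgebra.single w 1) = MonoidAlgebra.single (sg w) 1 := by
  rw [← MonoidAlgebra.of_apply, dTau_of, MonoidAlgebra.of_apply]



lemma diag_apply (g : FW → ℂ) (f : FW →₀ ℂ) (w0 : FW) :
    (f.sum fun w c => Finsupp.single w (g w * c)) w0 = g w0 * f w0 := by
  classical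
  rw [Finsupp.sum_apply, Finsupp.sum, Finset.sum_eq_single w0]
  · simp [Finsupp.single_apply]
  · intro b _ hne; simp [Finsupp.single_apply, hne]
  · intro h; simp [Finsupp.notMem_support_iff.mp h]

lemma dRho_apply (n : ℕ) (f : FA) (w0 : FW) :
    (dRho n f).coeff w0 = xi n ^ ew w0 * f.coeff w0 := by
  classical
  have h1 : dRho n f = f.coeff.sum fun w c => MonoidAlgebra.single w (xi n ^ ew w * c) := by
    conv_lhs => rw [← MonoidAlgebra.sum_coeff_single f]
    rw [map_finsuppSum]
    apply Finsupp.sum_congr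
    intro w _
    have : (MonoidAlgebra.single w (f.coeff w) : FA) = (f.coeff w) • MonoidAlgebra.single w 1 := by
      rw [MonoidAlgebra.smul_single', mul_one]
    rw [this, map_smul, dRho_single]
    show (f.coeff w) • MonoidAlgebra.single w (xi n ^ ew w) = _
    rw [MonoidAlgebra.smul_single', mul_comm]
  rw [h1, MonoidAlgebra.coeff_finsuppSum]
  simp only [MonoidAlgebra.coeff_single]
  rw [diag_apply]

lemma dTau_apply (f : FA) (w0 : FW) : (dTau f).coeff w0 = f.coeff (sg w0) := by
  classical
  have h1 : dTau f = f.coeff.sum fun w c => MonoidAlgebra.single (sg w) c := by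
    conv_lhs => rw [← MonoidAlgebra.sum_coeff_single f]
    rw [map_finsuppSum]
    apply Finsupp.sum_congr
    intro w _
    have : (MonoidAlgebra.single w (f.coeff w) : FA) = (f.coeff w) • MonoidAlgebra.single w 1 := by
      rw [MonoidAlgebra.smul_single', mul_one]
    rw [this, map_smul, dTau_single]
    show (f.coeff w) • MonoidAlgebra.single (sg w) (1:ℂ) = _
    rw [MonoidAlgebra.smul_single', mul_one]
  rw [h1, MonoidAlgebra.coeff_finsuppSum]
  simp only [MonoidAlgebra.coeff_single]
  rw [Finsupp.sum_apply, Finsupp.sum, Finset.sum_eq_single (sg w0)]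
  · simp [Finsupp.single_apply, sg_sg]
  · intro b _ hne
    rw [Finsupp.single_apply, if_neg]
    intro h; exact hne (by rw [← h, sg_sg])
  · intro h; simp [Finsupp.notMem_support_iff.mp h, Finsupp.single_apply, sg_sg]

lemma xi_zpow_eq_one_iff (n : ℕ) (hn : n ≠ 0) (e : ℤ) : xi n ^ e = 1 ↔ (n:ℤ) ∣ e :=
  (Complex.isPrimitiveRoot_exp n hn).zpow_eq_one_iff_dvd e

lemma mem_inf_iff (n j : ℕ) (hn : n ≠ 0) (f : FA) :
    f ∈ (invAlg n).toSubmodule ⊓ degComp j ↔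
      (∀ w ∈ f.coeff.support, FreeMonoid.length w = j) ∧
      (∀ w ∈ f.coeff.support, (n:ℤ) ∣ ew w) ∧ (∀ w, f.coeff (sg w) = f.coeff w) := by
  classical
  rw [Submodule.mem_inf, Subalgebra.mem_toSubmodule, invAlg, Algebra.mem_inf,
    AlgHom.mem_equalizer, AlgHom.mem_equalizer, degComp, MonoidAlgebra.mem_supported]
  constructor
  · rintro ⟨⟨hr, ht⟩, hs⟩
    refine ⟨fun w hw => hs hw, fun w hw => ?_, fun w => ?_⟩
    · have := congrArg (fun g : FA => g.coeff w) hr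
      simp only [AlgHom.coe_id, id_eq] at this
      rw [dRho_apply] at this
      have hfw : f.coeff w ≠ 0 := Finsupp.mem_support_iff.mp hw
      have h2 : xi n ^ ew w * f.coeff w = 1 * f.coeff w := by rw [one_mul]; exact this
      exact (xi_zpow_eq_one_iff n hn _).mp (mul_right_cancel₀ hfw h2)
    · have := congrArg (fun g : FA => g.coeff w) ht
      simp only [AlgHom.coe_id, id_eq] at this
      rwa [dTau_apply] at this
  · rintro ⟨hlen, hdvd, hsym⟩
    refine ⟨⟨?_, ?_⟩, fun w hw => hlen w hw⟩
    · ext w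
      rw [dRho_apply]
      simp only [AlgHom.coe_id, id_eq]
      by_cases hw : w ∈ f.coeff.support
      · rw [(xi_zpow_eq_one_iff n hn _).mpr (hdvd w hw), one_mul]
      · rw [Finsupp.notMem_support_iff.mp hw, mul_zero]
    · ext w
      rw [dTau_apply]
      simp only [AlgHom.coe_id, id_eq]
      exact hsym w


instance : DecidableEq FW :=
  fun a b => decidable_of_iff (FreeMonoid.toList a = FreeMonoid.toList b)
    (Equiv.injective _).eq_iff

-- head of a word
def hd (w : FW) : Fin 2 := (FreeMonoid.toList w).headI

lemma toList_sg (w : FW) : FreeMonoid.toList (sg w) = (FreeMonoid.toList w).map sw :=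
  FreeMonoid.toList_map _ _

lemma hd_sg (w : FW) (h : FreeMonoid.toList w ≠ []) : hd (sg w) = sw (hd w) := by
  rw [hd, hd, toList_sg]
  cases hw : FreeMonoid.toList w with
  | nil => exact absurd hw h
  | cons a t => simp

lemma sw_ne (a : Fin 2) : sw a ≠ a := by fin_cases a <;> decide

lemma sg_ne (w : FW) (h : FreeMonoid.toList w ≠ []) : sg w ≠ w := by
  intro he
  have := hd_sg w h
  rw [he] at this
  exact sw_ne (hd w) this.symm

lemma toList_ne_nil (w : FW) (j : ℕ) (hj : 1 ≤ j) (hw : FreeMonoid.length w = j) :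
    FreeMonoid.toList w ≠ [] := by
  have : (FreeMonoid.toList w).length = j := hw
  intro h; rw [h] at this; simp at this; omega

-- the basis vector
def bv (w : FW) : FA := MonoidAlgebra.single w 1 + MonoidAlgebra.single (sg w) 1

lemma bv_apply (w x : FW) :
    (bv w).coeff x = (if w = x then (1:ℂ) else 0) + (if sg w = x then 1 else 0) := by
  classical
  rw [bv, MonoidAlgebra.coeff_add, Finsupp.add_apply]
  congr 1 <;> exact Finsupp.single_apply

-- Finite sets of words
def efn {j : ℕ} (p : Fin j → Fin 2) : ℤ := ∑ i, eps (p i)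

def Phi {j : ℕ} (p : Fin j → Fin 2) : FW := FreeMonoid.ofList (List.ofFn p)

lemma ew_Phi {j : ℕ} (p : Fin j → Fin 2) : ew (Phi p) = efn p := by
  rw [ew, Phi, FreeMonoid.toList_ofList, List.map_ofFn, List.sum_ofFn, efn]
  rfl

lemma length_Phi {j : ℕ} (p : Fin j → Fin 2) : FreeMonoid.length (Phi p) = j := by
  show (FreeMonoid.toList (Phi p)).length = j
  rw [Phi, FreeMonoid.toList_ofList, List.length_ofFn]

lemma Phi_inj {j : ℕ} : Function.Injective (Phi (j := j)) := by
  intro p q h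
  rw [Phi, Phi] at h
  exact List.ofFn_injective (FreeMonoid.ofList.injective h)

lemma exists_Phi (w : FW) (j : ℕ) (hw : FreeMonoid.length w = j) :
    ∃ p : Fin j → Fin 2, Phi p = w := by
  subst hw
  exact ⟨(FreeMonoid.toList w).get, by
    show FreeMonoid.ofList (List.ofFn (FreeMonoid.toList w).get) = w
    rw [List.ofFn_get, FreeMonoid.ofList_toList]⟩

variable (n j : ℕ)

def Nfin : Finset FW :=
  ((Finset.univ : Finset (Fin j → Fin 2)).filter fun p => (n:ℤ) ∣ efn p).image Phi

lemma mem_Nfin (w : FW) :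
    w ∈ Nfin n j ↔ FreeMonoid.length w = j ∧ (n:ℤ) ∣ ew w := by
  constructor
  · intro hw
    rcases Finset.mem_image.mp hw with ⟨p, hp, rfl⟩
    rw [Finset.mem_filter] at hp
    exact ⟨length_Phi p, by rw [ew_Phi]; exact hp.2⟩
  · rintro ⟨h1, h2⟩
    rcases exists_Phi w j h1 with ⟨p, rfl⟩
    exact Finset.mem_image.mpr ⟨p, Finset.mem_filter.mpr ⟨Finset.mem_univ _,
      by rw [← ew_Phi]; exact h2⟩, rfl⟩

def Bfin : Finset FW := (Nfin n j).filter fun w => hd w = 0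

lemma mem_Bfin (w : FW) :
    w ∈ Bfin n j ↔ FreeMonoid.length w = j ∧ (n:ℤ) ∣ ew w ∧ hd w = 0 := by
  rw [Bfin, Finset.mem_filter, mem_Nfin]; tauto

lemma card_Nfin_eq (hj : 1 ≤ j) : (Nfin n j).card = 2 * (Bfin n j).card := by
  classical
  have hsplit := Finset.card_filter_add_card_filter_not
    (s := Nfin n j) (p := fun w => hd w = 0)
  have hbij : ((Nfin n j).filter fun w => ¬ hd w = 0).card = (Bfin n j).card := by
    apply Finset.card_bij' (fun w _ => sg w) (fun w _ => sg w)
    · intro a ha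
      rw [Finset.mem_filter, mem_Nfin] at ha
      obtain ⟨⟨hl, hd1⟩, hh⟩ := ha
      have hne := toList_ne_nil a j hj hl
      rw [mem_Bfin]
      refine ⟨by rw [length_sg]; exact hl, by rw [ew_sg]; exact Dvd.dvd.neg_right hd1, ?_⟩
      rw [hd, ← hd] -- no-op
      rw [show hd (sg a) = sw (hd a) from hd_sg a hne]
      have : hd a = 1 := by
        rcases (by omega : (hd a : ℕ) = 0 ∨ (hd a : ℕ) = 1) with h | h
        · exact absurd (Fin.ext h) hh
        · exact Fin.ext h
      rw [this]; rfl
    · intro a ha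
      rw [mem_Bfin] at ha
      obtain ⟨hl, hdvd, hh⟩ := ha
      have hne := toList_ne_nil a j hj hl
      rw [Finset.mem_filter, mem_Nfin]
      refine ⟨⟨by rw [length_sg]; exact hl, by rw [ew_sg]; exact Dvd.dvd.neg_right hdvd⟩, ?_⟩
      rw [show hd (sg a) = sw (hd a) from hd_sg a hne, hh]
      decide
    · intro a _; exact sg_sg a
    · intro a _; exact sg_sg a
  have hBf : (Nfin n j).filter (fun w => hd w = 0) = Bfin n j := rfl
  rw [hBf] at hsplit
  omega

lemma bv_coeff (hj : 1 ≤ j) {w x : FW} (hw : w ∈ Bfin n j) (hx : x ∈ Bfin n j) :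
    (bv w).coeff x = if w = x then 1 else 0 := by
  rw [mem_Bfin] at hw hx
  have hne2 : sg w ≠ x := by
    intro h
    have hne := toList_ne_nil w j hj hw.1
    have : hd x = sw (hd w) := by rw [← h]; exact hd_sg w hne
    rw [hw.2.2, hx.2.2] at this
    exact absurd this.symm (by decide)
  rw [bv_apply, if_neg hne2, add_zero]

lemma bv_mem_inf (hn : n ≠ 0) {w : FW} (hw : w ∈ Bfin n j) :
    bv w ∈ (invAlg n).toSubmodule ⊓ degComp j := by
  classical
  rw [mem_inf_iff n j hn]
  rw [mem_Bfin] at hw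
  have hsupp : (bv w).coeff.support ⊆ {w, sg w} := by
    refine (Finsupp.support_add).trans ?_
    intro x hx
    rcases Finset.mem_union.mp hx with h | h
    · exact Finset.mem_insert.mpr (Or.inl (Finset.mem_singleton.mp
        (Finsupp.support_single_subset h)))
    · exact Finset.mem_insert.mpr (Or.inr (Finsupp.support_single_subset h))
  refine ⟨?_, ?_, ?_⟩
  · intro x hx
    rcases Finset.mem_insert.mp (hsupp hx) with h | h
    · rw [h]; exact hw.1
    · rw [Finset.mem_singleton.mp h, length_sg]; exact hw.1
  · intro x hx
    rcases Finset.mem_insert.mp (hsupp hx) with h | h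
    · rw [h]; exact hw.2.1
    · rw [Finset.mem_singleton.mp h, ew_sg]; exact Dvd.dvd.neg_right hw.2.1
  · intro x
    have e1 : (if w = sg x then (1:ℂ) else 0) = (if sg w = x then 1 else 0) := by
      by_cases h : sg w = x
      · rw [if_pos h, if_pos (by rw [← h, sg_sg])]
      · rw [if_neg h, if_neg (fun hh => h (by rw [hh, sg_sg]))]
    have e2 : (if sg w = sg x then (1:ℂ) else 0) = (if w = x then 1 else 0) := by
      by_cases h : w = x
      · rw [if_pos h, if_pos (by rw [h])]
      · rw [if_neg (fun hh => h (sg_inj hh)), if_neg h]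
    rw [bv_apply, bv_apply, e1, e2]
    exact add_comm _ _

lemma repr_eq (hn : n ≠ 0) (hj : 1 ≤ j) (f : FA)
    (hf : f ∈ (invAlg n).toSubmodule ⊓ degComp j) :
    f = ∑ w ∈ f.coeff.support.filter (fun w => hd w = 0), f.coeff w • bv w := by
  classical
  rw [mem_inf_iff n j hn] at hf
  obtain ⟨hlen, _, hsym⟩ := hf
  ext x
  rw [MonoidAlgebra.coeff_sum, Finsupp.finset_sum_apply]
  have hterm : ∀ w, (f.coeff w • bv w).coeff x =
      f.coeff w * ((if w = x then (1:ℂ) else 0) + (if sg w = x then 1 else 0)) := by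
    intro w; rw [MonoidAlgebra.coeff_smul_apply, bv_apply, smul_eq_mul]
  by_cases hx : f.coeff x = 0
  · rw [hx]
    apply (Finset.sum_eq_zero _).symm
    intro w hw
    rw [Finset.mem_filter] at hw
    rw [hterm]
    by_cases h1 : w = x
    · rw [← h1] at hx
      rw [hx, zero_mul]
    · by_cases h2 : sg w = x
      · have : f.coeff w = 0 := by rw [← hsym w, h2, hx]
        rw [this, zero_mul]
      · rw [if_neg h1, if_neg h2, add_zero, mul_zero]
  · have hxs : x ∈ f.coeff.support := Finsupp.mem_support_iff.mpr hx
    have hxne := toList_ne_nil x j hj (hlen x hxs)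
    by_cases h0 : hd x = 0
    · rw [Finset.sum_eq_single_of_mem x (Finset.mem_filter.mpr ⟨hxs, h0⟩)]
      · rw [hterm, if_pos rfl, if_neg (sg_ne x hxne), add_zero, mul_one]
      · intro w hw hne
        rw [Finset.mem_filter] at hw
        have hwne := toList_ne_nil w j hj (hlen w hw.1)
        rw [hterm, if_neg hne, if_neg, add_zero, mul_zero]
        intro h
        have : hd x = sw (hd w) := by rw [← h]; exact hd_sg w hwne
        rw [hw.2, h0] at this
        exact absurd this (by decide)
    · have h1 : hd x = 1 := by
        rcases (by omega : (hd x : ℕ) = 0 ∨ (hd x : ℕ) = 1) with h | h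
        · exact absurd (Fin.ext h) h0
        · exact Fin.ext h
      have hsgx : sg x ∈ f.coeff.support := by
        rw [Finsupp.mem_support_iff, hsym x]; exact hx
      have hhsg : hd (sg x) = 0 := by
        rw [hd_sg x hxne, h1]; rfl
      rw [Finset.sum_eq_single_of_mem (sg x) (Finset.mem_filter.mpr ⟨hsgx, hhsg⟩)]
      · rw [hterm, sg_sg, if_pos rfl, if_neg, zero_add, hsym x, mul_one]
        intro h
        exact absurd (by rw [← h, hhsg] : hd x = 0) h0
      · intro w hw hne
        rw [Finset.mem_filter] at hw
        rw [hterm, if_neg, if_neg, add_zero, mul_zero]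
        · intro h
          exact hne (by rw [← h, sg_sg])
        · intro h
          exact h0 (by rw [← h, hw.2])
  -- note: (0:FA) x = 0 handled by rw [hx]?

lemma inf_eq_span (hn : n ≠ 0) (hj : 1 ≤ j) :
    (invAlg n).toSubmodule ⊓ degComp j = Submodule.span ℂ (bv '' ↑(Bfin n j)) := by
  classical
  apply le_antisymm
  · intro f hf
    rw [repr_eq n j hn hj f hf]
    have hf' := (mem_inf_iff n j hn f).mp hf
    refine Submodule.sum_mem _ fun w hw => Submodule.smul_mem _ _ (Submodule.subset_span ?_)
    rw [Finset.mem_filter] at hw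
    exact ⟨w, Finset.mem_coe.mpr ((mem_Bfin n j w).mpr
      ⟨hf'.1 w hw.1, hf'.2.1 w hw.1, hw.2⟩), rfl⟩
  · rw [Submodule.span_le]
    rintro x ⟨w, hw, rfl⟩
    exact bv_mem_inf n j hn (Finset.mem_coe.mp hw)

lemma bv_injOn (hj : 1 ≤ j) : Set.InjOn bv ↑(Bfin n j) := by
  intro w hw w' hw' h
  have hww := Finset.mem_coe.mp hw
  have hw'w := Finset.mem_coe.mp hw'
  have h1 := congrArg (fun g : FA => g.coeff w) h
  rw [bv_coeff n j hj hww hww, if_pos rfl, bv_coeff n j hj hw'w hww] at h1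
  by_contra hne
  rw [if_neg (fun hh => hne hh.symm)] at h1
  exact one_ne_zero h1

lemma bv_linIndep (hj : 1 ≤ j) :
    LinearIndependent ℂ (Subtype.val : ↥(bv '' ↑(Bfin n j)) → FA) := by
  classical
  rw [linearIndependent_iff']
  intro t g hsum i0 hi0
  obtain ⟨w0, hw0, hbw0⟩ := i0.2
  have hcoef := congrArg (fun h : FA => h.coeff w0) hsum
  simp only [MonoidAlgebra.coeff_zero, Finsupp.coe_zero, Pi.zero_apply] at hcoef
  rw [MonoidAlgebra.coeff_sum, Finsupp.finset_sum_apply] at hcoef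
  rw [Finset.sum_eq_single_of_mem i0 hi0] at hcoef
  · rw [MonoidAlgebra.coeff_smul_apply, ← hbw0, bv_coeff n j hj (Finset.mem_coe.mp hw0)
      (Finset.mem_coe.mp hw0), if_pos rfl, smul_eq_mul, mul_one] at hcoef
    exact hcoef
  · intro i _ hne
    obtain ⟨w', hw', hbw'⟩ := i.2
    rw [MonoidAlgebra.coeff_smul_apply, ← hbw', bv_coeff n j hj (Finset.mem_coe.mp hw')
      (Finset.mem_coe.mp hw0), if_neg, smul_eq_mul, mul_zero]
    intro hh
    apply hne
    apply Subtype.ext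
    rw [← hbw', ← hbw0, hh]

lemma aDim_eq_card (hn : n ≠ 0) (hj : 1 ≤ j) : aDim n j = (Bfin n j).card := by
  classical
  haveI : Fintype ↥(bv '' ↑(Bfin n j)) := ((Bfin n j).finite_toSet.image bv).fintype
  rw [aDim, inf_eq_span n j hn hj, finrank_span_set_eq_card (bv_linIndep n j hj)]
  rw [Set.toFinset_card, Set.card_image_of_inj_on (bv_injOn n j hj)]
  simp

lemma length_one_eq_zero : FreeMonoid.length (1 : FW) = 0 := rfl

lemma eq_one_of_length_zero (w : FW) (h : FreeMonoid.length w = 0) : w = 1 := by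
  have h2 : FreeMonoid.toList w = [] := List.length_eq_zero_iff.mp h
  have := congrArg FreeMonoid.ofList h2
  rwa [FreeMonoid.ofList_toList, FreeMonoid.ofList_nil] at this

lemma aDim_zero (n : ℕ) (hn : n ≠ 0) : aDim n 0 = 1 := by
  classical
  have hspan : (invAlg n).toSubmodule ⊓ degComp 0 =
      Submodule.span ℂ {(MonoidAlgebra.single (1:FW) (1:ℂ) : FA)} := by
    apply le_antisymm
    · intro f hf
      rw [mem_inf_iff n 0 hn] at hf
      have hsupp : f.coeff.support ⊆ {(1:FW)} := by
        intro w hw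
        rw [Finset.mem_singleton]
        exact eq_one_of_length_zero w (hf.1 w hw)
      have hf1 : f = MonoidAlgebra.single (1:FW) (f.coeff 1) :=
        MonoidAlgebra.coeff_injective (Finsupp.support_subset_singleton.mp hsupp)
      rw [Submodule.mem_span_singleton]
      exact ⟨f.coeff 1, by rw [MonoidAlgebra.smul_single', mul_one]; exact hf1.symm⟩
    · rw [Submodule.span_le, Set.singleton_subset_iff, SetLike.mem_coe, mem_inf_iff n 0 hn]
      refine ⟨?_, ?_, ?_⟩
      · intro w hw
        have := Finsupp.support_single_subset hw
        rw [Finset.mem_singleton] at this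
        rw [this]; rfl
      · intro w hw
        have := Finsupp.support_single_subset hw
        rw [Finset.mem_singleton] at this
        rw [this, ew_one]
        exact dvd_zero _
      · intro w
        rw [MonoidAlgebra.coeff_single_apply, MonoidAlgebra.coeff_single_apply]
        by_cases h : w = 1
        · rw [if_pos (show (1:FW) = sg w by rw [h, sg_one]), if_pos (show (1:FW) = w from h.symm)]
        · rw [if_neg (fun hh => h (by rw [← sg_sg w, ← hh, sg_one])),
            if_neg (fun hh => h hh.symm)]
  rw [aDim, hspan, finrank_span_singleton ?_]
  intro h
  have := congrArg (fun g : FA => g.coeff 1) h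
  simp [MonoidAlgebra.coeff_single_apply] at this

-- Part B : the root-of-unity sum
lemma zpow_sum₀ {ι : Type*} (x : ℂ) (hx : x ≠ 0) (s : Finset ι) (e : ι → ℤ) :
    x ^ (∑ i ∈ s, e i) = ∏ i ∈ s, x ^ e i := by
  classical
  induction s using Finset.cons_induction with
  | empty => simp
  | cons a s ha ih => rw [Finset.sum_cons, Finset.prod_cons, zpow_add₀ hx, ih]

lemma xi_pow_n (n : ℕ) (hn : n ≠ 0) : xi n ^ n = 1 :=
  (Complex.isPrimitiveRoot_exp n hn).pow_eq_one

lemma xiSumPow (n j : ℕ) (hn : n ≠ 0) :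
    ∑ k ∈ Finset.range n, (xi n ^ (k:ℤ) + xi n ^ (-(k:ℤ))) ^ j
      = (n : ℂ) * (Nfin n j).card := by
  classical
  have step1 : ∀ k : ℕ, (xi n ^ (k:ℤ) + xi n ^ (-(k:ℤ))) ^ j
      = ∑ p : Fin j → Fin 2, xi n ^ ((k:ℤ) * efn p) := by
    intro k
    have h1 : xi n ^ (k:ℤ) + xi n ^ (-(k:ℤ)) = ∑ a : Fin 2, xi n ^ ((k:ℤ) * eps a) := by
      rw [Fin.sum_univ_two]
      simp [eps]
    rw [h1, Fintype.sum_pow]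
    apply Finset.sum_congr rfl
    intro p _
    rw [show (k:ℤ) * efn p = ∑ i, (k:ℤ) * eps (p i) by rw [efn, Finset.mul_sum],
      zpow_sum₀ _ (xi_ne_zero n)]
  rw [Finset.sum_congr rfl fun k _ => step1 k, Finset.sum_comm]
  have step2 : ∀ p : Fin j → Fin 2,
      ∑ k ∈ Finset.range n, xi n ^ ((k:ℤ) * efn p)
        = if (n:ℤ) ∣ efn p then (n:ℂ) else 0 := by
    intro p
    have hrw : ∀ k : ℕ, xi n ^ ((k:ℤ) * efn p) = (xi n ^ efn p) ^ k := by
      intro k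
      rw [mul_comm, zpow_mul, zpow_natCast]
    rw [Finset.sum_congr rfl fun k _ => hrw k]
    by_cases hd : (n:ℤ) ∣ efn p
    · rw [if_pos hd, (xi_zpow_eq_one_iff n hn _).mpr hd]
      simp
    · rw [if_neg hd, geom_sum_eq (fun h => hd ((xi_zpow_eq_one_iff n hn _).mp h))]
      rw [← zpow_natCast (xi n ^ efn p), ← zpow_mul, mul_comm, zpow_mul, zpow_natCast,
        xi_pow_n n hn, one_zpow, sub_self, zero_div]
  rw [Finset.sum_congr rfl fun p _ => step2 p, ← Finset.sum_filter]
  rw [Finset.sum_const, Nfin, Finset.card_image_of_injective _ Phi_inj, nsmul_eq_mul, mul_comm]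

lemma two_cos_eq (n k : ℕ) (hn : n ≠ 0) :
    ((2 * Real.cos (2 * Real.pi * k / n) : ℝ) : ℂ) = xi n ^ (k:ℤ) + xi n ^ (-(k:ℤ)) := by
  have b1 := Complex.exp_int_mul (2 * Real.pi * Complex.I / n) ((k:ℤ))
  have b2 := Complex.exp_int_mul (2 * Real.pi * Complex.I / n) (-(k:ℤ))
  have h1 : xi n ^ (k:ℤ) = Complex.exp ((2 * (Real.pi:ℂ) * k / n) * Complex.I) := by
    rw [xi, ← b1]
    congr 1
    push_cast
    ring
  have h2 : xi n ^ (-(k:ℤ)) = Complex.exp ((-(2 * (Real.pi:ℂ) * k / n)) * Complex.I) := by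
    rw [xi, ← b2]
    congr 1
    push_cast
    ring
  rw [h1, h2, ← Complex.two_cos]
  push_cast [Complex.ofReal_cos]
  norm_num

lemma real_sum (n j : ℕ) (hn : n ≠ 0) :
    ∑ k ∈ Finset.range n, (2 * Real.cos (2 * Real.pi * k / n)) ^ j
      = (n:ℝ) * ((Nfin n j).card : ℝ) := by
  apply Complex.ofReal_injective
  rw [Complex.ofReal_sum]
  have h1 : ∀ k ∈ Finset.range n,
      ((((2 * Real.cos (2 * Real.pi * k / n)) ^ j : ℝ)) : ℂ)
        = (xi n ^ (k:ℤ) + xi n ^ (-(k:ℤ))) ^ j := by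
    intro k _
    rw [Complex.ofReal_pow, two_cos_eq n k hn]
  rw [Finset.sum_congr rfl h1, xiSumPow n j hn]
  push_cast
  ring

/-- Hilbert series of the dihedral invariants of the free algebra of rank 2: even case
`n = 2m+2`, coefficientwise. -/
theorem dihedral_invariants_hilbert_series_even (m n : ℕ) (hm : 1 ≤ m) (hn : n = 2 * m + 2) :
    aDim n 0 = 1 ∧
      ∀ j : ℕ, 1 ≤ j →
        (aDim n j : ℝ) =
          2 ^ j / (2 * n) + (-2 : ℝ) ^ j / (2 * n) +
            (1 / n) * ∑ k ∈ Finset.Icc 1 m, (2 * Real.cos (2 * π * k / n)) ^ j := by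
  have hn0 : n ≠ 0 := by omega
  have hnR : (n:ℝ) ≠ 0 := Nat.cast_ne_zero.mpr hn0
  constructor
  · exact aDim_zero n hn0
  · intro j hj
    set c : ℕ → ℝ := fun k => (2 * Real.cos (2 * Real.pi * k / n)) ^ j with hc
    have hsum : ∑ k ∈ Finset.range n, c k = (n:ℝ) * ((Nfin n j).card : ℝ) :=
      real_sum n j hn0
    -- split the range
    have e1 : Finset.range n =
        insert 0 (insert (m+1) ((Finset.Icc 1 m) ∪ (Finset.Icc (m+2) (2*m+1)))) := by
      ext x
      simp only [Finset.mem_range, Finset.mem_insert, Finset.mem_union, Finset.mem_Icc, hn]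
      omega
    have hd1 : (0:ℕ) ∉ insert (m+1) ((Finset.Icc 1 m) ∪ (Finset.Icc (m+2) (2*m+1))) := by
      simp only [Finset.mem_insert, Finset.mem_union, Finset.mem_Icc]
      omega
    have hd2 : (m+1) ∉ (Finset.Icc 1 m) ∪ (Finset.Icc (m+2) (2*m+1)) := by
      simp only [Finset.mem_union, Finset.mem_Icc]
      omega
    have hd3 : Disjoint (Finset.Icc 1 m) (Finset.Icc (m+2) (2*m+1)) := by
      rw [Finset.disjoint_left]
      intro a ha hb
      rw [Finset.mem_Icc] at ha hb
      omega
    have hsplit : ∑ k ∈ Finset.range n, c k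
        = c 0 + (c (m+1) + (∑ k ∈ Finset.Icc 1 m, c k
            + ∑ k ∈ Finset.Icc (m+2) (2*m+1), c k)) := by
      rw [e1, Finset.sum_insert hd1, Finset.sum_insert hd2, Finset.sum_union hd3]
    -- reflection
    have hrefl : ∑ k ∈ Finset.Icc (m+2) (2*m+1), c k = ∑ k ∈ Finset.Icc 1 m, c k := by
      apply Finset.sum_nbij' (i := fun k => n - k) (j := fun k => n - k)
      · intro a ha
        rw [Finset.mem_Icc] at ha ⊢
        omega
      · intro a ha
        rw [Finset.mem_Icc] at ha ⊢
        omega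
      · intro a ha
        rw [Finset.mem_Icc] at ha
        omega
      · intro a ha
        rw [Finset.mem_Icc] at ha
        omega
      · intro a ha
        rw [Finset.mem_Icc] at ha
        have hle : a ≤ n := by omega
        have hcast : ((n - a : ℕ) : ℝ) = (n:ℝ) - a := by
          push_cast [Nat.cast_sub hle]
          ring
        have harg : 2 * Real.pi * ((n - a : ℕ) : ℝ) / n
            = 2 * Real.pi - 2 * Real.pi * a / n := by
          rw [hcast]
          field_simp
        rw [hc]
        simp only
        rw [harg, Real.cos_two_pi_sub]
    have h0 : c 0 = 2 ^ j := by
      rw [hc]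
      simp
    have hm1 : c (m+1) = (-2) ^ j := by
      rw [hc]
      simp only
      have harg : 2 * Real.pi * ((m+1 : ℕ) : ℝ) / n = Real.pi := by
        rw [hn]
        push_cast
        field_simp
      rw [harg, Real.cos_pi]
      norm_num
    -- cards
    have hA : (aDim n j : ℝ) = ((Bfin n j).card : ℝ) := by
      rw [aDim_eq_card n j hn0 hj]
    have hNB : ((Nfin n j).card : ℝ) = 2 * ((Bfin n j).card : ℝ) := by
      rw [card_Nfin_eq n j hj]
      push_cast
      ring
    have key : (n:ℝ) * (2 * ((Bfin n j).card : ℝ))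
        = 2 ^ j + (-2:ℝ) ^ j + 2 * ∑ k ∈ Finset.Icc 1 m, c k := by
      rw [← hNB, ← hsum, hsplit, h0, hm1, hrefl]
      ring
    rw [hA]
    have hgoal : (((Bfin n j).card : ℝ)) =
        2 ^ j / (2 * n) + (-2 : ℝ) ^ j / (2 * n)
          + (1 / n) * ∑ k ∈ Finset.Icc 1 m, c k := by
      field_simp
      linear_combination key
    exact hgoal

end
end

section
/- Let b ≥ 1 and c ≥ 0 be integers, and let D be a graded subalgebra of ℂ⟨u,v⟩ that is permutation-closed (closed under Koryukin's action on each homogeneous component) and contains the elements uv + vu and u^b v^c + v^b u^c. Then D also contains u·v·u^b·v^c + v·u·v^b·u^c, and consequently u^{b+1} v^{c+1} + v^{b+1} u^{c+1} ∈ D. -/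
open scoped Real

noncomputable section

/-- Koryukin's position permutation on words: if `w` has length `k`, the `i`-th letter of
`w ∘ σ` is the `σ⁻¹(i)`-th letter of `w`; words of other lengths are left unchanged. -/
def wordPerm (k : ℕ) (σ : Equiv.Perm (Fin k)) (w : FW) : FW :=
  if h : (FreeMonoid.toList w).length = k then
    FreeMonoid.ofList
      (List.ofFn fun i : Fin k => (FreeMonoid.toList w).get (finCongr h.symm (σ⁻¹ i)))
  else w

/-- Koryukin's action of `Sym(k)`, extended ℂ-linearly. -/
def koryukin (k : ℕ) (σ : Equiv.Perm (Fin k)) : FA →ₗ[ℂ] FA :=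
  MonoidAlgebra.mapDomainLinearMap ℂ ℂ (wordPerm k σ)

/-- A subalgebra is graded if it contains every homogeneous component of each of
its elements. -/
def IsGradedSub (D : Subalgebra ℂ FA) : Prop :=
  ∀ f ∈ D, ∀ j : ℕ, MonoidAlgebra.ofCoeff (Finsupp.filter (fun w : FW => FreeMonoid.length w = j) f.coeff) ∈ D

/-- A subalgebra is permutation-closed if it is closed under Koryukin's action on
homogeneous elements. -/
def PermClosed (D : Subalgebra ℂ FA) : Prop :=
  ∀ (k : ℕ) (σ : Equiv.Perm (Fin k)), ∀ f ∈ D, f ∈ degComp k → koryukin k σ f ∈ D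

/-!
Expand `(uv + vu)(u^b v^c + v^b u^c) = A + B + C + E` with `A = uv·u^b v^c`, `B = uv·v^b u^c`,
`C = vu·u^b v^c`, `E = vu·v^b u^c`, all of degree `b + c + 2` (positions counted from `0`).
The transposition `(1 2)` fixes `B` and `C`, so `A + E - A' - E'` lies in `D`, where `A'`, `E'`
are the images of `A`, `E`. The transposition `(0 1)` exchanges
`A ↔ C`, `E ↔ B` and fixes `A'` and `E'`; subtracting gives `2 (A' + E') ∈ D`, hence `A + E ∈ D`.
Finally `(1 b+1)` moves the second letter of `A` and `E` behind the first block, giving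
`u^(b+1) v^(c+1) + v^(b+1) u^(c+1)`.
-/

theorem Submodule.add_mem_of_add_add_add_mem {K V : Type*} [Field K] [NeZero (2 : K)]
    [AddCommGroup V] [Module K V] {M : Submodule K V} {S T : V →ₗ[K] V}
    (hS : ∀ x ∈ M, S x ∈ M) (hT : ∀ x ∈ M, T x ∈ M) {a b c e : V} (hsum : a + b + c + e ∈ M)
    (hSb : S b = b) (hSc : S c = c) (hTa : T a = c) (hTe : T e = b)
    (hTSa : T (S a) = S a) (hTSe : T (S e) = S e) : a + e ∈ M := by
  have hdiff : a + e - S a - S e ∈ M := by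
    convert M.sub_mem hsum (hS _ hsum) using 1
    simp only [map_add, hSb, hSc]
    abel
  have hdiff' : c + b - S a - S e ∈ M := by
    convert hT _ hdiff using 1
    simp only [map_sub, map_add, hTa, hTe, hTSa, hTSe]
  have himage : S a + S e ∈ M := by
    have htwice : (2 : K) • (S a + S e) ∈ M := by
      convert M.sub_mem (M.sub_mem hsum hdiff) hdiff' using 1
      rw [two_smul]
      abel
    simpa [smul_smul, inv_mul_cancel₀ (two_ne_zero (α := K))] using M.smul_mem (2 : K)⁻¹ htwice
  simpa using M.add_mem hdiff himage

lemma Function.comp_swap_of_eq {α β : Type*} [DecidableEq α] {f : α → β} {i j : α}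
    (h : f i = f j) : f ∘ Equiv.swap i j = f := by
  rw [Equiv.comp_swap_eq_update, h, Function.update_eq_self, ← h, Function.update_eq_self]

lemma Fin.val_two_of_lt {n : ℕ} [NeZero n] (h : 2 < n) : ((2 : Fin n) : ℕ) = 2 :=
  Nat.mod_eq_of_lt h

def gen (x : Fin 2) : FA := MonoidAlgebra.of ℂ FW (FreeMonoid.of x)

lemma gen_zero : gen 0 = gu := rfl

lemma gen_one : gen 1 = gv := rfl

lemma gen_pow (x : Fin 2) (n : ℕ) :
    gen x ^ n = MonoidAlgebra.of ℂ FW (FreeMonoid.ofList (List.replicate n x)) := by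
  induction n with
  | zero => exact (map_one (MonoidAlgebra.of ℂ FW)).symm
  | succ n ih => rw [pow_succ', ih, List.replicate_succ, FreeMonoid.ofList_cons, map_mul]; rfl

def word {k : ℕ} (g : Fin k → Fin 2) : FA :=
  MonoidAlgebra.of ℂ FW (FreeMonoid.ofList (List.ofFn g))

lemma word_eq_of_list {k : ℕ} (g : Fin k → Fin 2) (l : List (Fin 2)) (hl : l.length = k)
    (hg : ∀ (i : ℕ) (hi : i < k), l[i]'(hl ▸ hi) = g ⟨i, hi⟩) :
    MonoidAlgebra.of ℂ FW (FreeMonoid.ofList l) = word g := by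
  rw [word]
  congr 2
  exact List.ext_getElem (by simpa using hl) fun i hi _ => by simpa using hg i (hl ▸ hi)

lemma word_mem_degComp {k : ℕ} (g : Fin k → Fin 2) : word g ∈ degComp k :=
  Finsupp.single_mem_supported ℂ (1 : ℂ) (List.length_ofFn (f := g))

lemma wordPerm_ofList_ofFn {k : ℕ} (σ : Equiv.Perm (Fin k)) (g : Fin k → Fin 2) :
    wordPerm k σ (FreeMonoid.ofList (List.ofFn g)) =
      FreeMonoid.ofList (List.ofFn (g ∘ ⇑σ⁻¹)) := by
  rw [wordPerm, dif_pos (by simp)]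
  congr 2
  funext i
  simp only [FreeMonoid.toList_ofList, List.get_ofFn, Function.comp_apply]
  rfl

lemma wordPerm_length {k : ℕ} (σ : Equiv.Perm (Fin k)) (w : FW) :
    (wordPerm k σ w).length = w.length := by
  unfold wordPerm
  split_ifs with h
  · exact List.length_ofFn.trans h.symm
  · rfl

lemma koryukin_word {k : ℕ} (σ : Equiv.Perm (Fin k)) (g : Fin k → Fin 2) :
    koryukin k σ (word g) = word (g ∘ ⇑σ⁻¹) := by
  rw [word, koryukin, MonoidAlgebra.of_apply, MonoidAlgebra.mapDomainLinearMap_single,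
    wordPerm_ofList_ofFn]
  rfl

lemma koryukin_swap_word {k : ℕ} (i j : Fin k) (g : Fin k → Fin 2) :
    koryukin k (Equiv.swap i j) (word g) = word (g ∘ Equiv.swap i j) := by
  rw [koryukin_word, Equiv.swap_inv]

lemma koryukin_mem_degComp {k : ℕ} (σ : Equiv.Perm (Fin k)) {f : FA} (hf : f ∈ degComp k) :
    koryukin k σ f ∈ degComp k := by
  classical
  intro w hw
  obtain ⟨w', hw', rfl⟩ := Finset.mem_image.1 (Finsupp.mapDomain_support hw)
  simpa [wordPerm_length] using hf hw'

lemma PermClosed.koryukin_mem {D : Subalgebra ℂ FA} (hD : PermClosed D) {k : ℕ}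
    (σ : Equiv.Perm (Fin k)) :
    ∀ f ∈ Subalgebra.toSubmodule D ⊓ degComp k,
      koryukin k σ f ∈ Subalgebra.toSubmodule D ⊓ degComp k :=
  fun _ ⟨hfD, hfk⟩ => ⟨hD k σ _ hfD hfk, koryukin_mem_degComp σ hfk⟩

/-- The letters of the word `p q r^b s^c`. -/
def headBlocks (b c : ℕ) (p q r s : Fin 2) (i : Fin (b + c + 2)) : Fin 2 :=
  if i.val = 0 then p else if i.val = 1 then q else if i.val < b + 2 then r else s

/-- The letters of the word `p^(b+1) s^(c+1)`. -/
def twoBlocks (b c : ℕ) (p s : Fin 2) (i : Fin (b + c + 2)) : Fin 2 :=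
  if i.val < b + 1 then p else s

lemma gen_mul_gen_mul_pow_mul_pow (b c : ℕ) (p q r s : Fin 2) :
    gen p * gen q * gen r ^ b * gen s ^ c = word (headBlocks b c p q r s) := by
  rw [gen_pow, gen_pow, gen, gen, ← map_mul, ← map_mul, ← map_mul]
  refine word_eq_of_list _ (p :: q :: (List.replicate b r ++ List.replicate c s)) (by simp) ?_
  rintro (_ | _ | i) hi
  · simp [headBlocks]
  · simp [headBlocks]
  · simp only [List.getElem_cons_succ, List.getElem_append, List.getElem_replicate,
      List.length_replicate, headBlocks]
    split_ifs <;> first | rfl | (exfalso; omega)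

lemma gen_pow_mul_gen_pow (b c : ℕ) (p s : Fin 2) :
    gen p ^ (b + 1) * gen s ^ (c + 1) = word (twoBlocks b c p s) := by
  rw [gen_pow, gen_pow, ← map_mul]
  refine word_eq_of_list _ (List.replicate (b + 1) p ++ List.replicate (c + 1) s)
    (by simp; omega) ?_
  intro i hi
  simp only [List.getElem_append, List.getElem_replicate, List.length_replicate, twoBlocks]
  split_ifs <;> rfl

lemma headBlocks_zero (b c : ℕ) (p q r s : Fin 2) : headBlocks b c p q r s 0 = p := rfl

lemma headBlocks_one (b c : ℕ) (p q r s : Fin 2) : headBlocks b c p q r s 1 = q := by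
  simp [headBlocks]

lemma headBlocks_two {b : ℕ} (c : ℕ) (p q r s : Fin 2) (hb : 1 ≤ b) :
    headBlocks b c p q r s 2 = r := by
  simp only [headBlocks, Fin.val_two_of_lt (show 2 < b + c + 2 by omega)]
  rw [if_neg (by omega), if_neg (by omega), if_pos (by omega)]

lemma headBlocks_comp_swap_zero_one (b c : ℕ) (p q r s : Fin 2) :
    headBlocks b c p q r s ∘ Equiv.swap 0 1 = headBlocks b c q p r s := by
  funext i
  rw [Function.comp_apply, Equiv.swap_apply_def]
  split_ifs with h0 h1
  · simp [h0, headBlocks]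
  · simp [h1, headBlocks]
  · rw [Fin.ext_iff, Fin.val_zero] at h0
    rw [Fin.ext_iff, Fin.val_one] at h1
    simp [headBlocks, h0, h1]

lemma headBlocks_comp_swap_one_two {b : ℕ} (c : ℕ) (p q s : Fin 2) (hb : 1 ≤ b) :
    headBlocks b c p q q s ∘ Equiv.swap 1 2 = headBlocks b c p q q s := by
  apply Function.comp_swap_of_eq
  rw [headBlocks_one, headBlocks_two c p q q s hb]

lemma headBlocks_comp_swap_one_two_comp_swap_zero_one {b : ℕ} (c : ℕ) (p q s : Fin 2)
    (hb : 1 ≤ b) :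
    (headBlocks b c p q p s ∘ Equiv.swap 1 2) ∘ Equiv.swap 0 1 =
      headBlocks b c p q p s ∘ Equiv.swap 1 2 := by
  apply Function.comp_swap_of_eq
  rw [Function.comp_apply, Function.comp_apply, Equiv.swap_apply_of_ne_of_ne,
    Equiv.swap_apply_left, headBlocks_zero, headBlocks_two c p q p s hb]
  all_goals rw [Ne, Fin.ext_iff, Fin.val_zero]
  · rw [Fin.val_one]; omega
  · rw [Fin.val_two_of_lt (by omega)]; omega

lemma headBlocks_comp_swap_one_succ (b c : ℕ) (p q : Fin 2) :
    headBlocks b c p q p q ∘ Equiv.swap 1 ⟨b + 1, by omega⟩ = twoBlocks b c p q := by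
  funext i
  rw [Function.comp_apply, Equiv.swap_apply_def]
  split_ifs with h1 hsucc
  · cases b <;> simp [h1, headBlocks, twoBlocks]
  · simp [hsucc, headBlocks, twoBlocks]
  · rw [Fin.ext_iff, Fin.val_one] at h1
    replace hsucc : i.val ≠ b + 1 := fun h => hsucc (Fin.ext h)
    simp only [headBlocks, twoBlocks]
    split_ifs <;> first | rfl | omega

theorem perm_closed_step_general (b c : ℕ) (hb : 1 ≤ b) (D : Subalgebra ℂ FA)
    (hperm : PermClosed D)
    (h1 : gu * gv + gv * gu ∈ D) (h2 : gu ^ b * gv ^ c + gv ^ b * gu ^ c ∈ D) :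
    gu * gv * gu ^ b * gv ^ c + gv * gu * gv ^ b * gu ^ c ∈ D ∧
      gu ^ (b + 1) * gv ^ (c + 1) + gv ^ (b + 1) * gu ^ (c + 1) ∈ D := by
  simp only [← gen_zero, ← gen_one, gen_mul_gen_mul_pow_mul_pow, gen_pow_mul_gen_pow] at h1 h2 ⊢
  set M := Subalgebra.toSubmodule D ⊓ degComp (b + c + 2)
  have hsum : word (headBlocks b c 0 1 0 1) + word (headBlocks b c 0 1 1 0)
      + word (headBlocks b c 1 0 0 1) + word (headBlocks b c 1 0 1 0) ∈ M := by
    refine Submodule.mem_inf.2 ⟨(Subalgebra.mem_toSubmodule D).2 ?_,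
      add_mem (add_mem (add_mem (word_mem_degComp _) (word_mem_degComp _))
        (word_mem_degComp _)) (word_mem_degComp _)⟩
    convert D.mul_mem h1 h2 using 1
    simp only [mul_add, add_mul, ← mul_assoc, gen_mul_gen_mul_pow_mul_pow]
    abel
  have hkey : word (headBlocks b c 0 1 0 1) + word (headBlocks b c 1 0 1 0) ∈ M := by
    refine M.add_mem_of_add_add_add_mem (hperm.koryukin_mem (Equiv.swap 1 2))
      (hperm.koryukin_mem (Equiv.swap 0 1)) hsum ?_ ?_ ?_ ?_ ?_ ?_ <;>
      simp only [koryukin_swap_word, headBlocks_comp_swap_zero_one,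
        headBlocks_comp_swap_one_two c _ _ _ hb,
        headBlocks_comp_swap_one_two_comp_swap_zero_one c _ _ _ hb]
  have hlast := hperm.koryukin_mem (Equiv.swap 1 ⟨b + 1, by omega⟩) _ hkey
  rw [map_add, koryukin_swap_word, koryukin_swap_word, headBlocks_comp_swap_one_succ,
    headBlocks_comp_swap_one_succ] at hlast
  exact ⟨hkey.1, hlast.1⟩

/-- Inductive step: a graded permutation-closed subalgebra containing `uv + vu` and
`u^b v^c + v^b u^c` also contains `uvu^b v^c + vuv^b u^c`, and hence
`u^{b+1} v^{c+1} + v^{b+1} u^{c+1}`. -/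
theorem perm_closed_step (b c : ℕ) (hb : 1 ≤ b) (D : Subalgebra ℂ FA)
    (hgraded : IsGradedSub D) (hperm : PermClosed D)
    (h1 : gu * gv + gv * gu ∈ D) (h2 : gu ^ b * gv ^ c + gv ^ b * gu ^ c ∈ D) :
    gu * gv * gu ^ b * gv ^ c + gv * gu * gv ^ b * gu ^ c ∈ D ∧
      gu ^ (b + 1) * gv ^ (c + 1) + gv ^ (b + 1) * gu ^ (c + 1) ∈ D :=
  perm_closed_step_general b c hb D hperm h1 h2

end
end

section
/- Let d ≥ 1, let G be a finite subgroup of GL_d(ℂ), and let G act on the free associative algebra ℂ⟨x_1,…,x_d⟩ by ℂ-algebra automorphisms extending the natural linear action of G on the ℂ-span of x_1,…,x_d. Then for every integer m ≥ 0, the ℂ-dimension of the space of G-invariant elements in the degree-m homogeneous component of ℂ⟨x_1,…,x_d⟩ (the span of words of length m) equals (1/|G|) · Σ_{g∈G} (tr g)^m, where tr g is the trace of g as a d×d matrix. -/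
/-!
The words of length `m` form a basis of the degree-`m` component, and `g` sends the word
`x_{w₁} ⋯ x_{wₘ}` to `∑_v (∏_k g_{v_k w_k}) x_{v₁} ⋯ x_{vₘ}`; the diagonal coefficients are
`∏_k g_{w_k w_k}`, so the trace of `g` on that component is `∑_w ∏_k g_{w_k w_k} = (tr g)^m`.
For a finite group in characteristic zero the average of the operators `g` is a projection onto
the invariants, so its trace, the average of the traces, is their dimension.
-/

noncomputable section

/-- The action of `g ∈ GL_d(ℂ)` on the free associative algebra `ℂ⟨x_1,…,x_d⟩`:
the algebra endomorphism with `g(x_i) = ∑_j g_{ji} x_j`. -/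
def glAct (d : ℕ) (g : GL (Fin d) ℂ) : FreeAlgebra ℂ (Fin d) →ₐ[ℂ] FreeAlgebra ℂ (Fin d) :=
  FreeAlgebra.lift ℂ fun i : Fin d =>
    ∑ j : Fin d, ((g : Matrix (Fin d) (Fin d) ℂ) j i) • FreeAlgebra.ι ℂ j

/-- The degree-`m` homogeneous component of `ℂ⟨x_1,…,x_d⟩`: the span of the words of
length `m`. -/
def freeDegComp (d m : ℕ) : Submodule ℂ (FreeAlgebra ℂ (Fin d)) :=
  Submodule.span ℂ
    {x : FreeAlgebra ℂ (Fin d) |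
      ∃ l : List (Fin d), l.length = m ∧ x = (l.map (FreeAlgebra.ι ℂ)).prod}

namespace FreeAlgebra

variable (R : Type*) {X : Type*} [CommSemiring R]

theorem basisFreeMonoid_apply (l : FreeMonoid X) :
    basisFreeMonoid R X l = (l.toList.map (ι R)).prod := by
  simp [basisFreeMonoid, equivMonoidAlgebraFreeMonoid, FreeMonoid.lift_apply]

def word {m : ℕ} (w : Fin m → X) : FreeAlgebra R X :=
  (List.ofFn fun k => ι R (w k)).prod

theorem word_succ {m : ℕ} (w : Fin (m + 1) → X) :
    word R w = ι R (w 0) * word R (Fin.tail w) := by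
  simp [word, List.ofFn_succ, Fin.tail]

theorem linearIndependent_word (m : ℕ) : LinearIndependent R (word R (X := X) (m := m)) := by
  have : word R (X := X) (m := m) =
      basisFreeMonoid R X ∘ fun w => FreeMonoid.ofList (List.ofFn w) := by
    funext w
    simp [basisFreeMonoid_apply, word, List.map_ofFn, Function.comp_def]
  rw [this]
  exact (basisFreeMonoid R X).linearIndependent.comp _
    fun v w h => List.ofFn_injective (FreeMonoid.ofList.injective h)

variable (X) in
def homogeneousSubmodule (m : ℕ) : Submodule R (FreeAlgebra R X) :=
  Submodule.span R (Set.range (word R (X := X) (m := m)))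

variable (X) in
def homogeneousBasis (m : ℕ) : Module.Basis (Fin m → X) R (homogeneousSubmodule R X m) :=
  Module.Basis.span (linearIndependent_word R m)

theorem homogeneousBasis_apply {m : ℕ} (w : Fin m → X) :
    (homogeneousBasis R X m w : FreeAlgebra R X) = word R w :=
  congrArg Subtype.val (Module.Basis.span_apply _ w)

variable [Fintype X]

def matrixSubst (A : Matrix X X R) : FreeAlgebra R X →ₐ[R] FreeAlgebra R X :=
  lift R fun i => ∑ j, A j i • ι R j

variable {R}

theorem matrixSubst_ι (A : Matrix X X R) (i : X) :
    matrixSubst R A (ι R i) = ∑ j, A j i • ι R j :=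
  lift_ι_apply _ _

theorem matrixSubst_word (A : Matrix X X R) {m : ℕ} (w : Fin m → X) :
    matrixSubst R A (word R w) = ∑ v : Fin m → X, (∏ k, A (v k) (w k)) • word R v := by
  induction m with
  | zero => simp [word]
  | succ m ih =>
    rw [word_succ, map_mul, matrixSubst_ι, ih, Finset.sum_mul_sum,
      ← (Fin.consEquiv fun _ => X).sum_comp, Fintype.sum_prod_type]
    refine Finset.sum_congr rfl fun j _ => Finset.sum_congr rfl fun v _ => ?_
    simp only [Fin.consEquiv, Equiv.coe_fn_mk]
    rw [smul_mul_smul_comm, word_succ R (Fin.cons j v : Fin (m + 1) → X)]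
    simp [Fin.prod_univ_succ, Fin.tail]

theorem matrixSubst_one [DecidableEq X] : matrixSubst R (1 : Matrix X X R) = AlgHom.id R _ :=
  hom_ext <| funext fun i => by simp [matrixSubst_ι, Matrix.one_apply, ite_smul]

theorem matrixSubst_mul (A B : Matrix X X R) :
    matrixSubst R (A * B) = (matrixSubst R A).comp (matrixSubst R B) := by
  refine hom_ext <| funext fun i => ?_
  simp only [Function.comp_apply, AlgHom.comp_apply, matrixSubst_ι, map_sum, map_smul,
    Finset.smul_sum, smul_smul, Matrix.mul_apply, Finset.sum_smul]
  rw [Finset.sum_comm]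
  simp [mul_comm]

variable [DecidableEq X]

variable (R X) in
def matrixRep : Representation R (Matrix X X R) (FreeAlgebra R X) where
  toFun A := (matrixSubst R A).toLinearMap
  map_one' := by rw [matrixSubst_one]; rfl
  map_mul' A B := by rw [matrixSubst_mul]; rfl

@[simp]
theorem matrixRep_apply (A : Matrix X X R) (x : FreeAlgebra R X) :
    matrixRep R X A x = matrixSubst R A x :=
  rfl

variable {G : Type*} [Monoid G]

variable (R) in
def homogeneousSubrep (φ : G →* Matrix X X R) (m : ℕ) :
    Subrepresentation ((matrixRep R X).comp φ) where
  toSubmodule := homogeneousSubmodule R X m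
  apply_mem_toSubmodule g v hv := by
    refine (Submodule.map_span_le _ _ _).mpr ?_ (Submodule.mem_map_of_mem hv)
    rintro _ ⟨w, rfl⟩
    rw [MonoidHom.comp_apply, matrixRep_apply, matrixSubst_word]
    exact Submodule.sum_mem _ fun v _ => Submodule.smul_mem _ _ (Submodule.subset_span ⟨v, rfl⟩)

theorem homogeneousSubrep_toSubmodule (φ : G →* Matrix X X R) (m : ℕ) :
    (homogeneousSubrep R φ m).toSubmodule = homogeneousSubmodule R X m :=
  rfl

instance (φ : G →* Matrix X X R) (m : ℕ) :
    Module.Finite R (homogeneousSubrep R φ m).toSubmodule :=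
  Module.Finite.of_basis (homogeneousBasis R X m)

theorem trace_homogeneousSubrep (φ : G →* Matrix X X R) (m : ℕ) (g : G) :
    LinearMap.trace R _ ((homogeneousSubrep R φ m).toRepresentation g) = (φ g).trace ^ m := by
  let b : Module.Basis (Fin m → X) R (homogeneousSubrep R φ m).toSubmodule :=
    homogeneousBasis R X m
  have hb : ∀ w, (homogeneousSubrep R φ m).toRepresentation g (b w) =
      ∑ v : Fin m → X, (∏ k, φ g (v k) (w k)) • b v := fun w => Subtype.ext <| by
    have hbw : ∀ v, (b v : FreeAlgebra R X) = word R v := homogeneousBasis_apply R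
    simp only [Submodule.coe_sum, SetLike.val_smul, hbw]
    exact (congrArg (matrixSubst R (φ g)) (hbw w)).trans (matrixSubst_word (φ g) w)
  rw [LinearMap.trace_eq_matrix_trace R b]
  simp only [Matrix.trace, Matrix.diag_apply, LinearMap.toMatrix_apply, hb, b.repr_sum_self,
    Fintype.sum_pow]

end FreeAlgebra

theorem Subrepresentation.map_subtype_invariants_toRepresentation {k G W : Type*} [CommRing k]
    [Group G] [AddCommGroup W] [Module k W] {ρ : Representation k G W}
    (σ : Subrepresentation ρ) :
    σ.toRepresentation.invariants.map σ.toSubmodule.subtype = σ.toSubmodule ⊓ ρ.invariants := by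
  ext v
  simp only [Submodule.mem_map, Submodule.mem_inf, Representation.mem_invariants]
  constructor
  · rintro ⟨u, hu, rfl⟩
    exact ⟨u.2, fun g => congrArg Subtype.val (hu g)⟩
  · rintro ⟨hv, hfix⟩
    exact ⟨⟨v, hv⟩, fun g => Subtype.ext (hfix g), rfl⟩

theorem freeDegComp_eq_homogeneousSubmodule (d m : ℕ) :
    freeDegComp d m = FreeAlgebra.homogeneousSubmodule ℂ (Fin d) m := by
  refine congrArg (Submodule.span ℂ) (Set.ext fun x => ⟨?_, ?_⟩)
  · rintro ⟨l, rfl, rfl⟩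
    exact ⟨l.get, by simp [FreeAlgebra.word]⟩
  · rintro ⟨w, rfl⟩
    exact ⟨List.ofFn w, List.length_ofFn, by simp [FreeAlgebra.word, List.map_ofFn, Function.comp_def]⟩

theorem iInf_eqLocus_glAct_eq_invariants (d : ℕ) (G : Subgroup (GL (Fin d) ℂ)) :
    ⨅ g ∈ G, LinearMap.eqLocus (glAct d g).toLinearMap LinearMap.id =
      Representation.invariants
        ((FreeAlgebra.matrixRep ℂ (Fin d)).comp ((Units.coeHom _).comp G.subtype)) := by
  ext x
  simp [Representation.mem_invariants, glAct, FreeAlgebra.matrixSubst]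

theorem noncommutative_molien_general (d : ℕ) (G : Subgroup (GL (Fin d) ℂ))
    [Fintype G] (m : ℕ) :
    (Module.finrank ℂ
        ↥(freeDegComp d m ⊓
          ⨅ g ∈ G, LinearMap.eqLocus (glAct d g).toLinearMap LinearMap.id) : ℂ) =
      (1 / (Fintype.card G : ℂ)) *
        ∑ g : G, (Matrix.trace ((g : GL (Fin d) ℂ) : Matrix (Fin d) (Fin d) ℂ)) ^ m := by
  let φ : G →* Matrix (Fin d) (Fin d) ℂ := (Units.coeHom _).comp G.subtype
  let σ := FreeAlgebra.homogeneousSubrep ℂ φ m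
  have : Invertible (Nat.card G : ℂ) := invertibleOfNonzero (Nat.cast_ne_zero.mpr Nat.card_pos.ne')
  have hchar := FDRep.average_char_eq_finrank_invariants (FDRep.of σ.toRepresentation)
  rw [FDRep.of_ρ'] at hchar
  rw [freeDegComp_eq_homogeneousSubmodule, iInf_eqLocus_glAct_eq_invariants,
    ← FreeAlgebra.homogeneousSubrep_toSubmodule φ, ← σ.map_subtype_invariants_toRepresentation,
    Submodule.finrank_map_subtype_eq, ← hchar]
  simp [FDRep.character, σ, φ, FreeAlgebra.trace_homogeneousSubrep, Nat.card_eq_fintype_card]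

/-- Noncommutative Molien formula of Dicks and Formanek, stated coefficientwise: the
dimension of the space of `G`-invariants of degree `m` equals `(1/|G|) ∑_{g ∈ G} (tr g)^m`. -/
theorem noncommutative_molien (d : ℕ) (hd : 1 ≤ d) (G : Subgroup (GL (Fin d) ℂ))
    [Fintype G] (m : ℕ) :
    (Module.finrank ℂ
        ↥(freeDegComp d m ⊓
          ⨅ g ∈ G, LinearMap.eqLocus (glAct d g).toLinearMap LinearMap.id) : ℂ) =
      (1 / (Fintype.card G : ℂ)) *
        ∑ g : G, (Matrix.trace ((g : GL (Fin d) ℂ) : Matrix (Fin d) (Fin d) ℂ)) ^ m :=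
  noncommutative_molien_general d G m

end
end
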